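/- Let R : J → M_d(ℝ) be continuous, B₂ : J → M_d(ℝ) be C³ with B₂″ + B₂R = 0, and C : J → ℝ be C³ with C″(s)B₂(s) + 2C′(s)B₂′(s) = 0 on J. Then for every s ∈ J: C′(s)C‴(s)B₂(s) − (3/2)(C″(s))²B₂(s) − 2(C′(s))²B₂(s)R(s) = 0. Consequently, if at some point ε ∈ J the matrix B₂(ε) is invertible and C′(ε) ≠ 0, then R(ε) = κ·I where κ = C‴(ε)/(2C′(ε)) − 3(C″(ε))²/(4C′(ε)²). -/

import Mathlib

attribute [local instance] Matrix.normedAddCommGroup Matrix.normedSpace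

lemma aux_diff {E : Type*} [NormedAddCommGroup E] [NormedSpace ℝ E] {f : ℝ → E} {J : Set ℝ}
    (hJ : IsOpen J) (hf : ContDiffOn ℝ 3 f J) {s : ℝ} (hs : s ∈ J) :
    DifferentiableAt ℝ f s ∧ DifferentiableAt ℝ (deriv f) s ∧
      DifferentiableAt ℝ (deriv (deriv f)) s := by
  have h1 : ContDiffOn ℝ 2 (deriv f) J := hf.deriv_of_isOpen hJ (by norm_num)
  have h2 : ContDiffOn ℝ 1 (deriv (deriv f)) J := h1.deriv_of_isOpen hJ (by norm_num)
  exact ⟨(hf.differentiableOn (by norm_num)).differentiableAt (hJ.mem_nhds hs),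
    (h1.differentiableOn (by norm_num)).differentiableAt (hJ.mem_nhds hs),
    (h2.differentiableOn (by norm_num)).differentiableAt (hJ.mem_nhds hs)⟩

/-- From C″B₂ + 2C′B₂′ = 0 and the Jacobi ODE one deduces
C′C‴B₂ − (3/2)(C″)²B₂ − 2(C′)²B₂R = 0; at points where B₂ is invertible and
C′ ≠ 0 the curvature matrix R is a scalar multiple of the identity. -/
theorem curvature_matrix_is_scalar (d : ℕ) (J : Set ℝ) (hJ : IsOpen J)
    (R B₂ : ℝ → Matrix (Fin d) (Fin d) ℝ) (C : ℝ → ℝ)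
    (hR : ContinuousOn R J) (hB₂ : ContDiffOn ℝ 3 B₂ J) (hC : ContDiffOn ℝ 3 C J)
    (hODE : ∀ s ∈ J, deriv (deriv B₂) s + B₂ s * R s = 0)
    (hrel : ∀ s ∈ J, (deriv (deriv C) s) • B₂ s + (2 * deriv C s) • deriv B₂ s = 0) :
    (∀ s ∈ J,
      (deriv C s * deriv (deriv (deriv C)) s) • B₂ s
        - ((3 / 2 : ℝ) * (deriv (deriv C) s) ^ 2) • B₂ s
        - (2 * (deriv C s) ^ 2) • (B₂ s * R s) = 0) ∧
    ∀ ε ∈ J, IsUnit (B₂ ε) → deriv C ε ≠ 0 →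
      R ε = (deriv (deriv (deriv C)) ε / (2 * deriv C ε)
        - 3 * (deriv (deriv C) ε) ^ 2 / (4 * (deriv C ε) ^ 2))
          • (1 : Matrix (Fin d) (Fin d) ℝ) := by
  have main : ∀ s ∈ J,
      (deriv C s * deriv (deriv (deriv C)) s) • B₂ s
        - ((3 / 2 : ℝ) * (deriv (deriv C) s) ^ 2) • B₂ s
        - (2 * (deriv C s) ^ 2) • (B₂ s * R s) = 0 := by
    intro s hs
    obtain ⟨hCd, hC'd, hC''d⟩ := aux_diff hJ hC hs
    obtain ⟨hBd, hB'd, hB''d⟩ := aux_diff hJ hB₂ hs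
    set F : ℝ → Matrix (Fin d) (Fin d) ℝ :=
      fun t => (deriv (deriv C) t) • B₂ t + (2 * deriv C t) • deriv B₂ t with hF
    have hd1 : HasDerivAt (fun t => (deriv (deriv C) t) • B₂ t)
        (deriv (deriv C) s • deriv B₂ s + deriv (deriv (deriv C)) s • B₂ s) s :=
      (hC''d.hasDerivAt).smul (hBd.hasDerivAt)
    have hd2 : HasDerivAt (fun t => (2 * deriv C t) • deriv B₂ t)
        ((2 * deriv C s) • deriv (deriv B₂) s + (2 * deriv (deriv C) s) • deriv B₂ s) s :=
      ((hC'd.hasDerivAt).const_mul 2).smul (hB'd.hasDerivAt)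
    have hdF : HasDerivAt F
        (deriv (deriv C) s • deriv B₂ s + deriv (deriv (deriv C)) s • B₂ s
          + ((2 * deriv C s) • deriv (deriv B₂) s + (2 * deriv (deriv C) s) • deriv B₂ s)) s :=
      hd1.add hd2
    have hF0 : F =ᶠ[nhds s] (fun _ => 0) := by
      filter_upwards [hJ.mem_nhds hs] with t ht using hrel t ht
    have hderivF : deriv F s = 0 := by
      exact ((hasDerivAt_const s (0 : Matrix (Fin d) (Fin d) ℝ)).congr_of_eventuallyEq hF0).deriv
    have E1 : deriv (deriv C) s • deriv B₂ s + deriv (deriv (deriv C)) s • B₂ s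
          + ((2 * deriv C s) • deriv (deriv B₂) s + (2 * deriv (deriv C) s) • deriv B₂ s) = 0 := by
      rw [← hdF.deriv]; exact hderivF
    have hB'' : deriv (deriv B₂) s = -(B₂ s * R s) :=
      eq_neg_of_add_eq_zero_left (hODE s hs)
    rw [hB''] at E1
    have E2 := hrel s hs
    linear_combination (norm := module) (deriv C s) • E1
      - ((3 / 2 : ℝ) * deriv (deriv C) s) • E2
  refine ⟨main, ?_⟩
  intro ε hε hu ha
  set a := deriv C ε
  set b := deriv (deriv C) ε
  set c := deriv (deriv (deriv C)) ε
  set X := B₂ ε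
  have h := main ε hε
  have h2 : (2 * a ^ 2) • (X * R ε) = (a * c - (3 / 2 : ℝ) * b ^ 2) • X := by
    linear_combination (norm := module) -h
  have hr : (2 * a ^ 2 : ℝ) ≠ 0 := by positivity
  have h3 : X * R ε = (c / (2 * a) - 3 * b ^ 2 / (4 * a ^ 2)) • X := by
    have := congrArg (fun M => (2 * a ^ 2 : ℝ)⁻¹ • M) h2
    simp only [smul_smul, inv_mul_cancel₀ hr, one_smul] at this
    rw [this]
    congr 1
    field_simp
    ring
  have h4 : X * R ε = X * ((c / (2 * a) - 3 * b ^ 2 / (4 * a ^ 2)) • 1) := by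
    rw [h3, mul_smul_comm, mul_one]
  exact hu.mul_left_cancel h4
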